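/- Let Δ ≥ 3 be an integer and let k ≥ e·Δ + 1 be a real number. Then for every d ∈ {0, 1, …, Δ−1}, with K = 1/Δ, we have 1/((k + d − Δ)·(1 − K)^d) < K, equivalently Δ·(Δ/(Δ-1))^d − d < k − Δ. -/

import Mathlib

theorem condition_holds (Δ : ℕ) (hΔ : 3 ≤ Δ) (k : ℝ)
    (hk : Real.exp 1 * Δ + 1 ≤ k) (d : ℕ) (hd : d < Δ) :
    1 / ((k + d - Δ) * (1 - 1 / (Δ : ℝ)) ^ d) < 1 / (Δ : ℝ) := by
  have hD : (3:ℝ) ≤ (Δ:ℝ) := by exact_mod_cast hΔ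
  have hD0 : (0:ℝ) < (Δ:ℝ) := by linarith
  have hD1 : (0:ℝ) < (Δ:ℝ) - 1 := by linarith
  have he : (2:ℝ) < Real.exp 1 := by
    have := Real.add_one_lt_exp (one_ne_zero (α := ℝ)); linarith
  set x : ℝ := 1 / ((Δ:ℝ) - 1) with hxdef
  have hx0 : 0 < x := by positivity
  have hxm : x * ((Δ:ℝ) - 1) = 1 := by
    rw [hxdef, one_div, inv_mul_cancel₀ (ne_of_gt hD1)]
  have hprod : (1 - 1/(Δ:ℝ)) * (1 + x) = 1 := by
    rw [hxdef]; field_simp; ring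
  have hb0 : 0 < 1 - 1/(Δ:ℝ) := by
    rw [sub_pos, div_lt_one hD0]; linarith
  have hdle : (d:ℝ) ≤ (Δ:ℝ) - 1 := by
    have : (d:ℝ) + 1 ≤ (Δ:ℝ) := by exact_mod_cast hd
    linarith
  have key : (Δ:ℝ) * (1+x)^d < k + d - Δ := by
    rcases Nat.eq_zero_or_pos d with h0 | h1
    · subst h0
      simp only [pow_zero, mul_one, Nat.cast_zero, add_zero]
      nlinarith
    · have h1x : 1 + x < Real.exp x := by
        have := Real.add_one_lt_exp (ne_of_gt hx0); linarith
      have hpow : (1+x)^d < Real.exp x ^ d :=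
        pow_lt_pow_left₀ h1x (by positivity) (Nat.pos_iff_ne_zero.mp h1)
      have hexp : Real.exp x ^ d = Real.exp (d * x) := (Real.exp_nat_mul x d).symm
      set t : ℝ := d * x with htdef
      have ht0 : 0 ≤ t := by positivity
      have ht1 : t ≤ 1 := by
        rw [htdef, hxdef]
        rw [mul_one_div, div_le_one hD1]
        exact hdle
      have hconv := convexOn_exp.2 (Set.mem_univ (0:ℝ)) (Set.mem_univ (1:ℝ))
        (by linarith : (0:ℝ) ≤ 1 - t) ht0 (by ring)
      simp only [smul_eq_mul, mul_zero, mul_one, zero_add, Real.exp_zero] at hconv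
      have hexpt : Real.exp t ≤ 1 - t + t * Real.exp 1 := by
        nlinarith [hconv]
      have hchain : (Δ:ℝ) * (1+x)^d < (Δ:ℝ) * (1 - t + t * Real.exp 1) := by
        have := hpow
        rw [hexp] at this
        nlinarith
      have hlin : (Δ:ℝ) * (1 - t + t * Real.exp 1) ≤ k + d - Δ := by
        -- t*(Δ-1) = d
        have htd : t * ((Δ:ℝ) - 1) = d := by
          rw [htdef]; rw [mul_assoc, hxm, mul_one]
        nlinarith [mul_nonneg (sub_nonneg.mpr hdle) (by nlinarith : (0:ℝ) ≤ (Real.exp 1 - 2) * Δ + 1)]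
      linarith
  have hbpow : 0 < (1 - 1/(Δ:ℝ))^d := pow_pos hb0 d
  have hpos : 0 < k + d - Δ := lt_trans (by positivity) key
  have hone : (1 - 1/(Δ:ℝ))^d * (1+x)^d = 1 := by
    rw [← mul_pow, hprod, one_pow]
  rw [div_lt_div_iff₀ (by positivity) hD0]
  nlinarith [mul_lt_mul_of_pos_right key hbpow]
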